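/- Let G be a finite group and let U, V, W be subgroups of G with [G:U] = a·r_u, [G:V] = a·r_v, [G:W] = a·r_w, where a, r_u, r_v, r_w are positive integers and r_u, r_v, r_w are pairwise coprime. If α(U,V) = α(U,W) = α(V,W) = 1, then VU = UV = UW = WU = VW = WV; in particular UV is a subgroup of G and [G:UV] = a. -/

import Mathlib

open scoped Pointwise

/-- `alphaIdx A B` is the integer `α(A,B)` satisfying
`[G : A ⊓ B] = lcm([G:A],[G:B]) · α(A,B)`. -/
noncomputable def alphaIdx {G : Type*} [Group G] (A B : Subgroup G) : ℕ :=
  (A ⊓ B).index / Nat.lcm A.index B.index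

section Aux

variable {G : Type*} [Group G]

/-- The standard bijection `A × B ≃ (A*B) × (A ⊓ B)`. -/
private noncomputable def prodInfEquiv (A B : Subgroup G) :
    (↥A × ↥B) ≃ ((↑A * ↑B : Set G) × ↥(A ⊓ B)) := by
  classical
  have hmem : ∀ x : (↑A * ↑B : Set G), ∃ u v, u ∈ A ∧ v ∈ B ∧ u * v = (x : G) := by
    rintro ⟨x, hx⟩
    rw [Set.mem_mul] at hx
    obtain ⟨u, hu, v, hv, h⟩ := hx
    exact ⟨u, v, hu, hv, h⟩
  choose f g hf hg hfg using hmem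
  refine
    { toFun := fun p =>
        letI x : (↑A * ↑B : Set G) := ⟨(p.1 : G) * p.2, Set.mul_mem_mul p.1.2 p.2.2⟩
        (x, ⟨(f x)⁻¹ * p.1, ?_, ?_⟩)
      invFun := fun q =>
        (⟨f q.1 * q.2, A.mul_mem (hf q.1) (Subgroup.mem_inf.mp q.2.2).1⟩,
         ⟨(q.2 : G)⁻¹ * g q.1, B.mul_mem (B.inv_mem (Subgroup.mem_inf.mp q.2.2).2) (hg q.1)⟩)
      left_inv := ?_
      right_inv := ?_ }
  case refine_1 => exact A.mul_mem (A.inv_mem (hf _)) p.1.2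
  case refine_2 =>
    have h := hfg (⟨(p.1 : G) * p.2, Set.mul_mem_mul p.1.2 p.2.2⟩ : (↑A * ↑B : Set G))
    have : (f ⟨(p.1 : G) * p.2, Set.mul_mem_mul p.1.2 p.2.2⟩)⁻¹ * (p.1 : G)
        = g ⟨(p.1 : G) * p.2, Set.mul_mem_mul p.1.2 p.2.2⟩ * (p.2 : G)⁻¹ := by
      rw [inv_mul_eq_iff_eq_mul, ← mul_assoc, h, mul_assoc, mul_inv_cancel, mul_one]
    rw [this]
    exact B.mul_mem (hg _) (B.inv_mem p.2.2)
  case refine_3 =>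
    rintro ⟨u, v⟩
    set x : (↑A * ↑B : Set G) := ⟨(u : G) * v, Set.mul_mem_mul u.2 v.2⟩ with hxdef
    have h := hfg x
    refine Prod.ext (Subtype.ext ?_) (Subtype.ext ?_)
    · show f x * ((f x)⁻¹ * (u : G)) = u
      group
    · show ((f x)⁻¹ * (u : G))⁻¹ * g x = (v : G)
      rw [mul_inv_rev, inv_inv, mul_assoc]
      rw [inv_mul_eq_iff_eq_mul]
      exact h
  case refine_4 =>
    rintro ⟨x, c⟩
    have hx : f x * (c : G) * ((c : G)⁻¹ * g x) = (x : G) := by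
      rw [mul_assoc, mul_inv_cancel_left, hfg x]
    have hfirst : (⟨f x * c * ((c : G)⁻¹ * g x),
        Set.mul_mem_mul (A.mul_mem (hf x) (Subgroup.mem_inf.mp c.2).1)
          (B.mul_mem (B.inv_mem (Subgroup.mem_inf.mp c.2).2) (hg x))⟩ : (↑A * ↑B : Set G)) = x :=
      Subtype.ext hx
    refine Prod.ext hfirst (Subtype.ext ?_)
    show (f _)⁻¹ * (f x * (c : G)) = (c : G)
    rw [hfirst]
    group

private lemma card_mul_inf (A B : Subgroup G) :
    Nat.card (↑A * ↑B : Set G) * Nat.card (A ⊓ B : Subgroup G) = Nat.card A * Nat.card B := by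
  have h := Nat.card_congr (prodInfEquiv A B)
  simpa [Nat.card_prod] using h.symm

variable [Fintype G]
set_option linter.unusedSectionVars false

/-- From `α(A,B) = 1` we get `[G : A ⊓ B] = a·p·q`. -/
private lemma inf_index_eq (A B : Subgroup G) (a p q : ℕ)
    (hA : A.index = a * p) (hB : B.index = a * q) (hpq : Nat.Coprime p q)
    (h1 : alphaIdx A B = 1) : (A ⊓ B).index = a * (p * q) := by
  have hdvd : Nat.lcm A.index B.index ∣ (A ⊓ B).index :=
    Nat.lcm_dvd (Subgroup.index_dvd_of_le inf_le_left) (Subgroup.index_dvd_of_le inf_le_right)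
  have h1' : (A ⊓ B).index / Nat.lcm A.index B.index = 1 := h1
  have h2 : (A ⊓ B).index = Nat.lcm A.index B.index * 1 :=
    Nat.eq_mul_of_div_eq_right hdvd h1'
  rw [h2, mul_one, hA, hB, Nat.lcm_mul_left, hpq.lcm_eq_mul]

/-- The cardinality of the product set `A*B` satisfies `|A*B| · a = |G|`. -/
private lemma card_set_mul (A B : Subgroup G) (a p q : ℕ)
    (hA : A.index = a * p) (hB : B.index = a * q)
    (hAB : (A ⊓ B).index = a * (p * q)) :
    Nat.card (↑A * ↑B : Set G) * a = Nat.card G := by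
  have npos : 0 < Nat.card G := Nat.card_pos
  have e1 := card_mul_inf A B
  have eI : Nat.card (A ⊓ B : Subgroup G) * (a * (p * q)) = Nat.card G := by
    rw [← hAB]; exact Subgroup.card_mul_index _
  have eA : Nat.card A * (a * p) = Nat.card G := by
    rw [← hA]; exact Subgroup.card_mul_index _
  have eB : Nat.card B * (a * q) = Nat.card G := by
    rw [← hB]; exact Subgroup.card_mul_index _
  have key : (Nat.card (↑A * ↑B : Set G) * a) * Nat.card G = Nat.card G * Nat.card G := by
    calc (Nat.card (↑A * ↑B : Set G) * a) * Nat.card G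
        = (Nat.card (↑A * ↑B : Set G) * a) * (Nat.card (A ⊓ B : Subgroup G) * (a * (p * q))) := by
          rw [eI]
      _ = (Nat.card (↑A * ↑B : Set G) * Nat.card (A ⊓ B : Subgroup G)) * (a * (a * (p * q))) := by
          ring
      _ = (Nat.card A * Nat.card B) * (a * (a * (p * q))) := by rw [e1]
      _ = (Nat.card A * (a * p)) * (Nat.card B * (a * q)) := by ring
      _ = Nat.card G * Nat.card G := by rw [eA, eB]
  exact Nat.eq_of_mul_eq_mul_right npos key

/-- Key lemma: under the hypotheses, `A*B = A*C` (both equal `A*(B ⊓ C)`). -/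
private lemma prod_eq (A B C : Subgroup G) (a p q r : ℕ)
    (ha : 0 < a) (hp : 0 < p) (hq : 0 < q) (hr : 0 < r)
    (hA : A.index = a * p) (hB : B.index = a * q) (hC : C.index = a * r)
    (hpq : Nat.Coprime p q) (hpr : Nat.Coprime p r) (hqr : Nat.Coprime q r)
    (hAB : (A ⊓ B).index = a * (p * q)) (hAC : (A ⊓ C).index = a * (p * r))
    (hBC : (B ⊓ C).index = a * (q * r)) :
    (A : Set G) * (B : Set G) = (A : Set G) * (C : Set G) := by
  have npos : 0 < Nat.card G := Nat.card_pos
  -- the triple intersection has index a*(p*(q*r))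
  have hdA : A.index ∣ ((A ⊓ B) ⊓ C).index :=
    Subgroup.index_dvd_of_le (inf_le_left.trans inf_le_left)
  have hdB : B.index ∣ ((A ⊓ B) ⊓ C).index :=
    Subgroup.index_dvd_of_le (inf_le_left.trans inf_le_right)
  have hdC : C.index ∣ ((A ⊓ B) ⊓ C).index := Subgroup.index_dvd_of_le inf_le_right
  have hlcm : a * (p * q * r) ∣ ((A ⊓ B) ⊓ C).index := by
    have h := Nat.lcm_dvd (Nat.lcm_dvd hdA hdB) hdC
    rwa [hA, hB, hC, Nat.lcm_mul_left, hpq.lcm_eq_mul, Nat.lcm_mul_left,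
      (hpr.mul hqr).lcm_eq_mul] at h
  have hrel : (C.relIndex (A ⊓ B)) * (A ⊓ B).index = ((A ⊓ B) ⊓ C).index := by
    rw [← Subgroup.inf_relIndex_left (A ⊓ B) C]
    exact Subgroup.relIndex_mul_index inf_le_left
  have hCB : C.relIndex B = r := by
    have h0 := Subgroup.relIndex_mul_index (inf_le_right : C ⊓ B ≤ B)
    rw [Subgroup.inf_relIndex_right, inf_comm C B] at h0
    rw [hB, hBC] at h0
    have h1 : C.relIndex B * (a * q) = r * (a * q) := by rw [h0]; ring
    exact Nat.eq_of_mul_eq_mul_right (by positivity) h1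
  have hkle : C.relIndex (A ⊓ B) ≤ r := by
    have h := Subgroup.relIndex_le_of_le_right (inf_le_right : A ⊓ B ≤ B)
      (by rw [hCB]; exact hr.ne')
    rwa [hCB] at h
  have hTne : ((A ⊓ B) ⊓ C).index ≠ 0 := Subgroup.index_ne_zero_of_finite
  have hkpos : 0 < C.relIndex (A ⊓ B) := by
    rcases Nat.eq_zero_or_pos (C.relIndex (A ⊓ B)) with h | h
    · exfalso; apply hTne; rw [← hrel, h, zero_mul]
    · exact h
  have hrdvdk : r ∣ C.relIndex (A ⊓ B) := by
    have h2 : (a * (p * q)) * r ∣ (a * (p * q)) * C.relIndex (A ⊓ B) := by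
      have e : (a * (p * q)) * C.relIndex (A ⊓ B) = ((A ⊓ B) ⊓ C).index := by
        rw [← hrel, hAB]; ring
      rw [e]
      have : (a * (p * q)) * r = a * (p * q * r) := by ring
      rw [this]; exact hlcm
    exact Nat.dvd_of_mul_dvd_mul_left (by positivity) h2
  have hkr : C.relIndex (A ⊓ B) = r := le_antisymm hkle (Nat.le_of_dvd hkpos hrdvdk)
  have hT : (A ⊓ (B ⊓ C)).index = a * (p * (q * r)) := by
    rw [← inf_assoc, ← hrel, hkr, hAB]; ring
  -- cardinalities
  have cab := card_set_mul A B a p q hA hB hAB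
  have cac := card_set_mul A C a p r hA hC hAC
  have cabc := card_set_mul A (B ⊓ C) a p (q * r) hA (by rw [hBC]) hT
  have habc_ab : Nat.card (↑A * ↑(B ⊓ C) : Set G) = Nat.card (↑A * ↑B : Set G) :=
    Nat.eq_of_mul_eq_mul_right ha (by rw [cab, cabc])
  have habc_ac : Nat.card (↑A * ↑(B ⊓ C) : Set G) = Nat.card (↑A * ↑C : Set G) :=
    Nat.eq_of_mul_eq_mul_right ha (by rw [cac, cabc])
  have hsub1 : (↑A * ↑(B ⊓ C) : Set G) ⊆ ↑A * ↑B := by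
    apply Set.mul_subset_mul_left
    rw [Subgroup.coe_inf]; exact Set.inter_subset_left
  have hsub2 : (↑A * ↑(B ⊓ C) : Set G) ⊆ ↑A * ↑C := by
    apply Set.mul_subset_mul_left
    rw [Subgroup.coe_inf]; exact Set.inter_subset_right
  have hEq1 : (↑A * ↑(B ⊓ C) : Set G) = ↑A * ↑B := by
    apply Set.eq_of_subset_of_ncard_le hsub1 _ (Set.toFinite _)
    rw [← Nat.card_coe_set_eq, ← Nat.card_coe_set_eq, habc_ab]
  have hEq2 : (↑A * ↑(B ⊓ C) : Set G) = ↑A * ↑C := by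
    apply Set.eq_of_subset_of_ncard_le hsub2 _ (Set.toFinite _)
    rw [← Nat.card_coe_set_eq, ← Nat.card_coe_set_eq, habc_ac]
  rw [← hEq1, hEq2]

end Aux

theorem products_equal_of_alphas_one
    (G : Type*) [Group G] [Fintype G] (U V W : Subgroup G)
    (a ru rv rw : ℕ) (ha : 0 < a) (hru : 0 < ru) (hrv : 0 < rv) (hrw : 0 < rw)
    (hU : U.index = a * ru) (hV : V.index = a * rv) (hW : W.index = a * rw)
    (huv : Nat.Coprime ru rv) (huw : Nat.Coprime ru rw) (hvw : Nat.Coprime rv rw)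
    (hUV : alphaIdx U V = 1) (hUW : alphaIdx U W = 1) (hVW : alphaIdx V W = 1) :
    (V : Set G) * (U : Set G) = (U : Set G) * (V : Set G) ∧
    (U : Set G) * (V : Set G) = (U : Set G) * (W : Set G) ∧
    (U : Set G) * (W : Set G) = (W : Set G) * (U : Set G) ∧
    (W : Set G) * (U : Set G) = (V : Set G) * (W : Set G) ∧
    (V : Set G) * (W : Set G) = (W : Set G) * (V : Set G) ∧
    ∃ H : Subgroup G, (H : Set G) = (U : Set G) * (V : Set G) ∧ H.index = a := by
  -- pairwise intersection indices
  have IUV : (U ⊓ V).index = a * (ru * rv) := inf_index_eq U V a ru rv hU hV huv hUV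
  have IUW : (U ⊓ W).index = a * (ru * rw) := inf_index_eq U W a ru rw hU hW huw hUW
  have IVW : (V ⊓ W).index = a * (rv * rw) := inf_index_eq V W a rv rw hV hW hvw hVW
  have IVU : (V ⊓ U).index = a * (rv * ru) := by rw [inf_comm, IUV]; ring
  have IWU : (W ⊓ U).index = a * (rw * ru) := by rw [inf_comm, IUW]; ring
  have IWV : (W ⊓ V).index = a * (rw * rv) := by rw [inf_comm, IVW]; ring
  -- the three instances of the key lemma
  have h1 : (U : Set G) * (V : Set G) = (U : Set G) * (W : Set G) :=
    prod_eq U V W a ru rv rw ha hru hrv hrw hU hV hW huv huw hvw IUV IUW IVW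
  have h2 : (V : Set G) * (U : Set G) = (V : Set G) * (W : Set G) :=
    prod_eq V U W a rv ru rw ha hrv hru hrw hV hU hW huv.symm hvw huw IVU IVW IUW
  have h3 : (W : Set G) * (U : Set G) = (W : Set G) * (V : Set G) :=
    prod_eq W U V a rw ru rv ha hrw hru hrv hW hU hV huw.symm hvw.symm huv IWU IWV IUV
  -- take inverses of the three identities
  have inv_eq : ∀ A B : Subgroup G, ((A : Set G) * (B : Set G))⁻¹ = (B : Set G) * (A : Set G) := by
    intro A B
    rw [mul_inv_rev, inv_coe_set, inv_coe_set]
  have h1' : (V : Set G) * (U : Set G) = (W : Set G) * (U : Set G) := by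
    rw [← inv_eq U V, ← inv_eq U W, h1]
  have h2' : (U : Set G) * (V : Set G) = (W : Set G) * (V : Set G) := by
    rw [← inv_eq V U, ← inv_eq V W, h2]
  have h3' : (U : Set G) * (W : Set G) = (V : Set G) * (W : Set G) := by
    rw [← inv_eq W U, ← inv_eq W V, h3]
  have g1 : (V : Set G) * (U : Set G) = (U : Set G) * (V : Set G) := by
    rw [h1', h3, h2'.symm]
  have g3 : (U : Set G) * (W : Set G) = (W : Set G) * (U : Set G) := by
    rw [h3', ← h2]; exact h1'
  have g4 : (W : Set G) * (U : Set G) = (V : Set G) * (W : Set G) := by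
    rw [← h1', h2]
  have g5 : (V : Set G) * (W : Set G) = (W : Set G) * (V : Set G) := by
    rw [← h2, h1']; exact h3
  refine ⟨g1, h1, g3, g4, g5, ?_⟩
  -- construct the subgroup
  let H : Subgroup G :=
    { carrier := (U : Set G) * (V : Set G)
      one_mem' := Set.mem_mul.mpr ⟨1, U.one_mem, 1, V.one_mem, one_mul 1⟩
      mul_mem' := by
        intro x y hx hy
        obtain ⟨u1, hu1, v1, hv1, rfl⟩ := Set.mem_mul.mp hx
        obtain ⟨u2, hu2, v2, hv2, rfl⟩ := Set.mem_mul.mp hy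
        have hmid : v1 * u2 ∈ (U : Set G) * (V : Set G) := by
          rw [← g1]; exact Set.mul_mem_mul hv1 hu2
        obtain ⟨u3, hu3, v3, hv3, h3e⟩ := Set.mem_mul.mp hmid
        refine Set.mem_mul.mpr ⟨u1 * u3, U.mul_mem hu1 hu3, v3 * v2, V.mul_mem hv3 hv2, ?_⟩
        calc (u1 * u3) * (v3 * v2) = u1 * ((u3 * v3) * v2) := by group
          _ = u1 * ((v1 * u2) * v2) := by rw [h3e]
          _ = (u1 * v1) * (u2 * v2) := by group
      inv_mem' := by
        intro x hx
        have h := Set.inv_mem_inv.mpr hx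
        rwa [inv_eq U V, g1] at h }
  refine ⟨H, rfl, ?_⟩
  have cset : Nat.card (↑U * ↑V : Set G) * a = Nat.card G := card_set_mul U V a ru rv hU hV IUV
  have cH : Nat.card H * H.index = Nat.card G := Subgroup.card_mul_index H
  have hHcard : Nat.card H = Nat.card (↑U * ↑V : Set G) := rfl
  have hne : Nat.card (↑U * ↑V : Set G) ≠ 0 := by
    intro h
    rw [h, zero_mul] at cset
    exact Nat.card_pos.ne' cset.symm
  have : Nat.card (↑U * ↑V : Set G) * H.index = Nat.card (↑U * ↑V : Set G) * a := by
    rw [← hHcard] at cset ⊢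
    rw [cH, cset]
  exact Nat.eq_of_mul_eq_mul_left (Nat.pos_of_ne_zero hne) this
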